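/- (Abel–Hurwitz normalization of the modified Abel distribution.) For every β > 0, every η ∈ (0,1), and every natural number n: Σ_{k=0}^n binom(n,k) η(1-η) (η + k/β)^{k-1} (1-η + (n-k)/β)^{n-k-1} = (1 + n/β)^{n-1}. Hence 𝔭_k^{(n)}(η) = binom(n,k) η(1-η)(η + k/β)^{k-1}(1-η+(n-k)/β)^{n-k-1} / (1+n/β)^{n-1} is a probability distribution on {0,…,n}. -/

import Mathlib

noncomputable def abelA : ℕ → ℝ → ℝ
  | 0, _ => 1
  | (n+1), x => x * (x + (n+1)) ^ n

lemma abelA_zero (x : ℝ) : abelA 0 x = 1 := rfl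
lemma abelA_succ (n : ℕ) (x : ℝ) : abelA (n+1) x = x * (x + (n+1)) ^ n := rfl
lemma abelA_at_zero (k : ℕ) : abelA (k+1) 0 = 0 := by simp [abelA_succ]

lemma hasDerivAt_abelA (k : ℕ) (x : ℝ) :
    HasDerivAt (abelA k) ((k : ℝ) * abelA (k-1) (x+1)) x := by
  cases k with
  | zero =>
    simpa [show abelA 0 = fun _ => (1:ℝ) from funext abelA_zero] using (hasDerivAt_const x (1:ℝ))
  | succ m =>
    cases m with
    | zero =>
      have h : HasDerivAt (fun x : ℝ => x * (x + (1:ℝ)) ^ 0) 1 x := by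
        simpa using (hasDerivAt_id' x)
      have h2 : HasDerivAt (abelA 1) 1 x := by
        have : abelA 1 = fun x : ℝ => x * (x + (1:ℝ)) ^ 0 := by
          funext y; rw [abelA_succ]; norm_num
        rw [this]; exact h
      simpa [abelA_zero] using h2
    | succ p =>
      have h1 : HasDerivAt (fun y : ℝ => y * (y + ((p:ℝ) + 2)) ^ (p+1))
          (1 * (x + ((p:ℝ) + 2)) ^ (p + 1) +
            x * ((p + 1 : ℕ) * (x + ((p:ℝ) + 2)) ^ (p + 1 - 1) * 1)) x :=
        (hasDerivAt_id x).mul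
          (((hasDerivAt_id x).add_const ((p:ℝ)+2)).pow (p+1))
      have heq : abelA (p+2) = fun y : ℝ => y * (y + ((p:ℝ)+2)) ^ (p+1) := by
        funext y; rw [abelA_succ]; push_cast; ring_nf
      rw [heq]
      convert h1 using 1
      show ((p + 2 : ℕ) : ℝ) * abelA (p+1) (x+1) = _
      rw [abelA_succ]
      have hps : (x + ((p:ℝ)+2)) ^ (p+1) = (x + ((p:ℝ)+2)) * (x + ((p:ℝ)+2)) ^ p := by
        rw [pow_succ]; ring
      simp only [Nat.add_sub_cancel]
      push_cast
      rw [hps]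
      ring

lemma abel_binomial : ∀ (n : ℕ) (x y : ℝ),
    ∑ k ∈ Finset.range (n+1), (n.choose k : ℝ) * abelA k x * abelA (n-k) y
      = abelA n (x+y) := by
  intro n
  induction n with
  | zero => intro x y; simp [abelA_zero]
  | succ n ih =>
    intro x y
    set F : ℝ → ℝ := fun x =>
      (∑ k ∈ Finset.range (n+2), ((n+1).choose k : ℝ) * abelA k x * abelA (n+1-k) y)
        - abelA (n+1) (x+y) with hF
    have hderiv : ∀ x : ℝ, HasDerivAt F 0 x := by
      intro x
      have hsum : HasDerivAt
          (fun x => ∑ k ∈ Finset.range (n+2),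
            ((n+1).choose k : ℝ) * abelA k x * abelA (n+1-k) y)
          (∑ k ∈ Finset.range (n+2),
            ((n+1).choose k : ℝ) * ((k : ℝ) * abelA (k-1) (x+1)) * abelA (n+1-k) y) x := by
        apply HasDerivAt.fun_sum
        intro k _
        exact (((hasDerivAt_abelA k x).const_mul (((n+1).choose k : ℝ))).mul_const _)
      have hsumval :
          (∑ k ∈ Finset.range (n+2),
            ((n+1).choose k : ℝ) * ((k : ℝ) * abelA (k-1) (x+1)) * abelA (n+1-k) y)
          = ((n:ℝ)+1) * abelA n ((x+1)+y) := by
        rw [Finset.sum_range_succ']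
        simp only [Nat.cast_zero, zero_mul, mul_zero, add_zero, Nat.add_sub_cancel]
        have hterm : ∀ i ∈ Finset.range (n+1),
            ((n+1).choose (i+1) : ℝ) * (((i:ℝ)+1) * abelA i (x+1)) * abelA (n+1-(i+1)) y
            = ((n:ℝ)+1) * ((n.choose i : ℝ) * abelA i (x+1) * abelA (n-i) y) := by
          intro i _
          have hc : ((n+1).choose (i+1) * (i+1) : ℕ) = (n+1) * n.choose i := by
            rw [← Nat.add_one_mul_choose_eq]
          have hcr : ((n+1).choose (i+1) : ℝ) * ((i:ℝ)+1) = ((n:ℝ)+1) * (n.choose i : ℝ) := by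
            have := congrArg (fun m : ℕ => (m : ℝ)) hc
            push_cast at this
            linarith [this]
          have : n + 1 - (i+1) = n - i := by omega
          rw [this]
          rw [show ((n+1).choose (i+1) : ℝ) * (((i:ℝ)+1) * abelA i (x+1)) * abelA (n-i) y
            = (((n+1).choose (i+1) : ℝ) * ((i:ℝ)+1)) * abelA i (x+1) * abelA (n-i) y by ring,
            hcr]
          ring
        rw [Finset.sum_congr rfl (by
          intro i hi
          have := hterm i hi
          push_cast at this ⊢
          convert this using 2)]
        rw [← Finset.mul_sum, ih (x+1) y]
      have hcomp : HasDerivAt (fun x => abelA (n+1) (x+y))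
          (((n:ℝ)+1) * abelA n ((x+y)+1)) x := by
        have h1 := (hasDerivAt_abelA (n+1) (x+y))
        have h2 : HasDerivAt (fun x : ℝ => x + y) 1 x := (hasDerivAt_id x).add_const y
        have := HasDerivAt.comp x h1 h2
        simpa [Nat.add_sub_cancel, Function.comp_def] using this
      have : HasDerivAt F (((n:ℝ)+1) * abelA n ((x+1)+y) - ((n:ℝ)+1) * abelA n ((x+y)+1)) x := by
        rw [hF]
        exact (hsumval ▸ hsum).sub hcomp
      have heq : ((n:ℝ)+1) * abelA n ((x+1)+y) - ((n:ℝ)+1) * abelA n ((x+y)+1) = 0 := by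
        rw [show (x+1)+y = (x+y)+1 by ring]; ring
      rwa [heq] at this
    have hdiff : Differentiable ℝ F := fun x => (hderiv x).differentiableAt
    have hconst : ∀ a b : ℝ, F a = F b :=
      is_const_of_deriv_eq_zero hdiff (fun x => (hderiv x).deriv)
    have hF0 : F 0 = 0 := by
      rw [hF]
      simp only [zero_add]
      rw [Finset.sum_range_succ']
      have : ∀ i ∈ Finset.range (n+1),
          ((n+1).choose (i+1) : ℝ) * abelA (i+1) 0 * abelA (n+1-(i+1)) y = 0 := by
        intro i _; rw [abelA_at_zero]; ring
      rw [Finset.sum_congr rfl this]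
      simp [abelA_zero]
    have hFx : F x = 0 := (hconst x 0).trans hF0
    simp only [hF] at hFx
    linarith [hFx]

lemma abel_conv (β : ℝ) (hβ : 0 < β) (c : ℝ) (hc : 0 < c) (k : ℕ) :
    c * (c + (k:ℝ)/β) ^ ((k:ℤ)-1) = β ^ (-(k:ℤ)) * abelA k (β*c) := by
  cases k with
  | zero =>
    simp [abelA_zero, mul_inv_cancel₀ hc.ne']
  | succ s =>
    have hb := hβ.ne'
    have he : ((s+1:ℕ):ℤ) - 1 = (s:ℤ) := by push_cast; ring
    have hzn : (β:ℝ) ^ (-((s+1:ℕ):ℤ)) = (β ^ (s+1))⁻¹ := by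
      rw [zpow_neg, zpow_natCast]
    rw [he, zpow_natCast, abelA_succ, hzn]
    have h1 : c + ((s+1:ℕ):ℝ)/β = (β*c + ((s+1:ℕ):ℝ))/β := by field_simp
    rw [h1, div_pow]
    push_cast
    field_simp
    ring

/-- Abel–Hurwitz normalization of the modified Abel distribution: for every
`β > 0`, `η ∈ (0,1)` and `n : ℕ`,
`Σ_{k=0}^n C(n,k) η(1-η) (η+k/β)^{k-1} (1-η+(n-k)/β)^{n-k-1} = (1+n/β)^{n-1}`,
so `𝔭_k^{(n)}(η) = C(n,k) η(1-η)(η+k/β)^{k-1}(1-η+(n-k)/β)^{n-k-1}/(1+n/β)^{n-1}`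
is a probability distribution on `{0,…,n}`. -/
theorem modified_abel_normalization (β : ℝ) (hβ : 0 < β)
    (η : ℝ) (hη : η ∈ Set.Ioo (0:ℝ) 1) (n : ℕ) :
    (∑ k ∈ Finset.range (n + 1),
        (n.choose k : ℝ) * (η * (1 - η)) * (η + k / β) ^ ((k : ℤ) - 1) *
          ((1 - η) + ((n - k : ℕ) : ℝ) / β) ^ (((n - k : ℕ) : ℤ) - 1)
      = (1 + n / β) ^ ((n : ℤ) - 1)) ∧
    (∀ k, k ≤ n →
      0 ≤ (n.choose k : ℝ) * (η * (1 - η)) * (η + k / β) ^ ((k : ℤ) - 1) *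
            ((1 - η) + ((n - k : ℕ) : ℝ) / β) ^ (((n - k : ℕ) : ℤ) - 1) /
          (1 + n / β) ^ ((n : ℤ) - 1)) := by
  obtain ⟨hη0, hη1⟩ := hη
  have h1η : (0:ℝ) < 1 - η := by linarith
  have hb := hβ.ne'
  constructor
  · have key : ∀ k ∈ Finset.range (n+1),
        (n.choose k : ℝ) * (η * (1 - η)) * (η + k / β) ^ ((k : ℤ) - 1) *
          ((1 - η) + ((n - k : ℕ) : ℝ) / β) ^ (((n - k : ℕ) : ℤ) - 1)
        = β ^ (-(n:ℤ)) * ((n.choose k : ℝ) * abelA k (β*η) * abelA (n-k) (β*(1-η))) := by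
      intro k hk
      have hkn : k ≤ n := Nat.lt_succ_iff.mp (Finset.mem_range.mp hk)
      have e1 := abel_conv β hβ η hη0 k
      have e2 := abel_conv β hβ (1-η) h1η (n-k)
      rw [show (n.choose k : ℝ) * (η * (1 - η)) * (η + k / β) ^ ((k : ℤ) - 1) *
          ((1 - η) + ((n - k : ℕ) : ℝ) / β) ^ (((n - k : ℕ) : ℤ) - 1)
        = (n.choose k : ℝ) * (η * (η + (k:ℝ) / β) ^ ((k : ℤ) - 1)) *
          ((1 - η) * ((1 - η) + ((n - k : ℕ) : ℝ) / β) ^ (((n - k : ℕ) : ℤ) - 1)) by ring,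
        e1, e2]
      have hz : β ^ (-(k:ℤ)) * β ^ (-((n-k:ℕ):ℤ)) = β ^ (-(n:ℤ)) := by
        rw [← zpow_add₀ hb]
        congr 1
        have : ((n-k:ℕ):ℤ) = (n:ℤ) - (k:ℤ) := by
          push_cast [Nat.cast_sub hkn]; ring
        rw [this]; ring
      rw [← hz]
      ring
    rw [Finset.sum_congr rfl key, ← Finset.mul_sum,
      abel_binomial n (β*η) (β*(1-η)), show β*η + β*(1-η) = β by ring]
    cases n with
    | zero => simp [abelA_zero]
    | succ m =>
      rw [abelA_succ]
      have he : ((m+1:ℕ):ℤ) - 1 = (m:ℤ) := by push_cast; ring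
      have hzn : (β:ℝ) ^ (-((m+1:ℕ):ℤ)) = (β ^ (m+1))⁻¹ := by
        rw [zpow_neg, zpow_natCast]
      rw [he, zpow_natCast, hzn]
      have h1 : 1 + ((m+1:ℕ):ℝ)/β = (β + ((m+1:ℕ):ℝ))/β := by field_simp
      rw [h1, div_pow]
      push_cast
      field_simp
      ring
  · intro k hk
    have p1 : (0:ℝ) < η + k/β := by
      have : (0:ℝ) ≤ (k:ℝ)/β := div_nonneg (Nat.cast_nonneg k) hβ.le
      linarith
    have p2 : (0:ℝ) < (1-η) + ((n-k:ℕ):ℝ)/β := by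
      have : (0:ℝ) ≤ ((n-k:ℕ):ℝ)/β := div_nonneg (Nat.cast_nonneg _) hβ.le
      linarith
    have p3 : (0:ℝ) < 1 + (n:ℝ)/β := by
      have : (0:ℝ) ≤ (n:ℝ)/β := div_nonneg (Nat.cast_nonneg _) hβ.le
      linarith
    apply div_nonneg _ (zpow_pos p3 _).le
    have := mul_pos hη0 h1η
    positivity
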